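/- Let W₁, ..., W_K be independent random variables each uniform on F^L for a finite field F, and let the keys Z₁,...,Z_K be jointly independent of (W₁,...,W_K). Suppose X_u is a deterministic function of (W_u, Z_u) for each u, and for some user k ≠ u the recovery constraint H(∑_{i=1}^K W_i | {X_i}_{i≠k}, W_k, Z_k) = 0 holds. Then H(X_u | {W_i, Z_i}_{i ∈ [K]∖{u}}) ≥ L·log|F|. -/

import Mathlib

open Finset

/-- Probability of `X = a` under the probability mass function `μ` on the finite
sample space `Ω`. -/
noncomputable def prW {Ω α : Type*} [Fintype Ω] [DecidableEq α] (μ : Ω → ℝ)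
    (X : Ω → α) (a : α) : ℝ :=
  ∑ ω ∈ Finset.univ.filter (fun ω => X ω = a), μ ω

/-- Shannon entropy (natural base) of `X` under the probability mass function `μ`. -/
noncomputable def entW {Ω α : Type*} [Fintype Ω] [Fintype α] [DecidableEq α] (μ : Ω → ℝ)
    (X : Ω → α) : ℝ :=
  -∑ a : α, prW μ X a * Real.log (prW μ X a)

/-- Conditional entropy `H(X | Y)` under `μ`. -/
noncomputable def condEntW {Ω α β : Type*} [Fintype Ω] [Fintype α] [Fintype β]
    [DecidableEq α] [DecidableEq β] (μ : Ω → ℝ) (X : Ω → α) (Y : Ω → β) : ℝ :=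
  entW μ (fun ω => (X ω, Y ω)) - entW μ Y

/-- Conditional mutual information `I(X ; Y | Z)` under `μ`. -/
noncomputable def cmiW {Ω α β γ : Type*} [Fintype Ω] [Fintype α] [Fintype β] [Fintype γ]
    [DecidableEq α] [DecidableEq β] [DecidableEq γ] (μ : Ω → ℝ)
    (X : Ω → α) (Y : Ω → β) (Z : Ω → γ) : ℝ :=
  entW μ (fun ω => (X ω, Z ω)) + entW μ (fun ω => (Y ω, Z ω))
    - entW μ (fun ω => (X ω, Y ω, Z ω)) - entW μ Z

/-- Product mass function making the inputs `W₁,…,W_K` i.i.d. uniform on `F^L` and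
jointly independent of the key randomness `z`, which has mass function `ν`. -/
noncomputable def dsaMeas (F : Type) [Fintype F] (K L : ℕ) {ΩZ : Type} [Fintype ΩZ]
    (ν : ΩZ → ℝ) : (Fin K → Fin L → F) × ΩZ → ℝ :=
  fun ω => ν ω.2 / (Fintype.card (Fin K → Fin L → F) : ℝ)

set_option linter.unusedSectionVars false

section AuxStmt12

variable {Ω α β : Type*} [Fintype Ω] [Fintype α] [Fintype β] [DecidableEq α] [DecidableEq β]

lemma prW_nonneg {μ : Ω → ℝ} (hμ0 : ∀ ω, 0 ≤ μ ω) (X : Ω → α) (a : α) :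
    0 ≤ prW μ X a :=
  Finset.sum_nonneg fun ω _ => hμ0 ω

lemma le_prW {μ : Ω → ℝ} (hμ0 : ∀ ω, 0 ≤ μ ω) (X : Ω → α) {ω : Ω} {a : α}
    (h : X ω = a) : μ ω ≤ prW μ X a :=
  Finset.single_le_sum (fun ω _ => hμ0 ω) (by simp [h])

/-- fiber decomposition of `prW` along a first coordinate -/
lemma prW_fiber (μ : Ω → ℝ) (X : Ω → α) (Y : Ω → β) (b : β) :
    prW μ Y b = ∑ a : α, prW μ (fun ω => (X ω, Y ω)) (a, b) := by
  unfold prW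
  rw [← Finset.sum_fiberwise (univ.filter (fun ω => Y ω = b)) X μ]
  refine Finset.sum_congr rfl fun a _ => ?_
  refine Finset.sum_congr ?_ fun _ _ => rfl
  ext ω
  simp only [mem_filter, mem_univ, true_and, filter_filter, Prod.mk.injEq]
  tauto

lemma prW_comp (μ : Ω → ℝ) (T : Ω → α) (f : α → β) (b : β) :
    prW μ (fun ω => f (T ω)) b = ∑ a ∈ univ.filter (fun a => f a = b), prW μ T a := by
  rw [Finset.sum_filter]
  unfold prW
  rw [← Finset.sum_fiberwise (univ.filter fun ω => f (T ω) = b) T μ]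
  refine Finset.sum_congr rfl fun a _ => ?_
  by_cases h : f a = b
  · rw [if_pos h]
    refine Finset.sum_congr ?_ fun _ _ => rfl
    ext ω
    simp only [mem_filter, mem_univ, true_and, filter_filter]
    constructor
    · rintro ⟨_, h2⟩; exact h2
    · rintro h2; exact ⟨by rw [h2, h], h2⟩
  · rw [if_neg h]
    refine Finset.sum_eq_zero fun ω hω => ?_
    simp only [mem_filter, filter_filter, mem_univ, true_and] at hω
    exact absurd (hω.2 ▸ hω.1) h

/-- entropy does not increase under deterministic maps -/
lemma entW_comp_le {μ : Ω → ℝ} (hμ0 : ∀ ω, 0 ≤ μ ω) (T : Ω → α) (f : α → β) :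
    entW μ (fun ω => f (T ω)) ≤ entW μ T := by
  unfold entW
  rw [neg_le_neg_iff]
  calc ∑ a : α, prW μ T a * Real.log (prW μ T a)
      = ∑ b : β, ∑ a ∈ univ.filter (fun a => f a = b),
          prW μ T a * Real.log (prW μ T a) := by
        rw [Finset.sum_fiberwise]
    _ ≤ ∑ b : β, prW μ (fun ω => f (T ω)) b * Real.log (prW μ (fun ω => f (T ω)) b) := by
        refine Finset.sum_le_sum fun b _ => ?_
        rw [prW_comp μ T f b, Finset.sum_mul]
        refine Finset.sum_le_sum fun a ha => ?_
        rcases eq_or_lt_of_le (prW_nonneg hμ0 T a) with h0 | h0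
        · rw [← h0]; simp
        · exact mul_le_mul_of_nonneg_left (Real.log_le_log h0
            (Finset.single_le_sum (fun a _ => prW_nonneg hμ0 T a) ha)) (le_of_lt h0)

/-- if `Y` determines `W` a.e. then `H(W,Y) = H(Y)` -/
lemma entW_pair_eq {μ : Ω → ℝ} (hμ0 : ∀ ω, 0 ≤ μ ω) (W : Ω → α) (Y : Ω → β)
    (hdet : ∀ ω ω', μ ω ≠ 0 → μ ω' ≠ 0 → Y ω = Y ω' → W ω = W ω') :
    entW μ (fun ω => (W ω, Y ω)) = entW μ Y := by
  unfold entW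
  congr 1
  rw [Fintype.sum_prod_type, Finset.sum_comm]
  refine Finset.sum_congr rfl fun b _ => ?_
  by_cases hb : ∃ ω₀, μ ω₀ ≠ 0 ∧ Y ω₀ = b
  · obtain ⟨ω₀, hω₀, hYb⟩ := hb
    have hP0 : ∀ a, a ≠ W ω₀ → prW μ (fun ω => (W ω, Y ω)) (a, b) = 0 := by
      intro a haa
      refine Finset.sum_eq_zero fun ω hω => ?_
      simp only [mem_filter, mem_univ, true_and, Prod.mk.injEq] at hω
      by_contra hμ
      exact haa (hω.1 ▸ hdet ω ω₀ hμ hω₀ (hω.2.trans hYb.symm))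
    have hPs : prW μ (fun ω => (W ω, Y ω)) (W ω₀, b) = prW μ Y b := by
      unfold prW
      rw [← Finset.sum_filter_add_sum_filter_not (univ.filter fun ω => Y ω = b)
        (fun ω => W ω = W ω₀) μ]
      have h2 : ∑ ω ∈ (univ.filter fun ω => Y ω = b).filter (fun ω => ¬ W ω = W ω₀),
          μ ω = 0 := by
        refine Finset.sum_eq_zero fun ω hω => ?_
        simp only [mem_filter, mem_univ, true_and] at hω
        by_contra hμ
        exact hω.2 (hdet ω ω₀ hμ hω₀ (hω.1.trans hYb.symm))
      rw [h2, add_zero]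
      refine (Finset.sum_congr ?_ fun _ _ => rfl).symm
      ext ω
      simp only [mem_filter, mem_univ, true_and, filter_filter, Prod.mk.injEq]
      tauto
    rw [Finset.sum_eq_single (W ω₀)]
    · rw [hPs]
    · intro a _ haa; rw [hP0 a haa, zero_mul]
    · intro h; exact absurd (Finset.mem_univ _) h
  · push_neg at hb
    have hP0 : ∀ a, prW μ (fun ω => (W ω, Y ω)) (a, b) = 0 := by
      intro a
      refine Finset.sum_eq_zero fun ω hω => ?_
      simp only [mem_filter, mem_univ, true_and, Prod.mk.injEq] at hω
      by_contra hμ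
      exact hb ω hμ hω.2
    have hp0 : prW μ Y b = 0 := by
      refine Finset.sum_eq_zero fun ω hω => ?_
      simp only [mem_filter, mem_univ, true_and] at hω
      by_contra hμ
      exact hb ω hμ hω
    simp [hP0, hp0]

lemma condEntW_eq_zero_det {μ : Ω → ℝ} (hμ0 : ∀ ω, 0 ≤ μ ω) (S : Ω → α) (Y : Ω → β)
    (h : condEntW μ S Y = 0) :
    ∀ ω ω', μ ω ≠ 0 → μ ω' ≠ 0 → Y ω = Y ω' → S ω = S ω' := by
  set P : α → β → ℝ := fun a b => prW μ (fun ω => (S ω, Y ω)) (a, b) with hPdef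
  have hPnn : ∀ a b, 0 ≤ P a b := fun a b => prW_nonneg hμ0 _ _
  have hPle : ∀ a b, P a b ≤ prW μ Y b := by
    intro a b
    rw [prW_fiber μ S Y b]
    exact Finset.single_le_sum (fun a _ => hPnn a b) (Finset.mem_univ a)
  have hterm : ∀ a b, 0 ≤ P a b * (Real.log (prW μ Y b) - Real.log (P a b)) := by
    intro a b
    rcases eq_or_lt_of_le (hPnn a b) with h0 | h0
    · rw [← h0, zero_mul]
    · exact mul_nonneg (le_of_lt h0) (sub_nonneg.2 (Real.log_le_log h0 (hPle a b)))
  have hsum : ∑ b : β, ∑ a : α,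
      P a b * (Real.log (prW μ Y b) - Real.log (P a b)) = 0 := by
    rw [← h]
    have step1 : ∀ b : β, ∑ a : α, P a b * (Real.log (prW μ Y b) - Real.log (P a b))
        = prW μ Y b * Real.log (prW μ Y b) - ∑ a : α, P a b * Real.log (P a b) := by
      intro b
      have h1 : prW μ Y b * Real.log (prW μ Y b)
          = ∑ a : α, P a b * Real.log (prW μ Y b) := by
        rw [← Finset.sum_mul, ← prW_fiber]
      rw [h1, ← Finset.sum_sub_distrib]
      exact Finset.sum_congr rfl fun a _ => mul_sub _ _ _
    calc ∑ b : β, ∑ a : α, P a b * (Real.log (prW μ Y b) - Real.log (P a b))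
        = ∑ b : β, (prW μ Y b * Real.log (prW μ Y b)
            - ∑ a : α, P a b * Real.log (P a b)) :=
          Finset.sum_congr rfl fun b _ => step1 b
      _ = ∑ b : β, prW μ Y b * Real.log (prW μ Y b)
            - ∑ b : β, ∑ a : α, P a b * Real.log (P a b) := Finset.sum_sub_distrib _ _
      _ = ∑ b : β, prW μ Y b * Real.log (prW μ Y b)
            - ∑ a : α, ∑ b : β, P a b * Real.log (P a b) := by rw [Finset.sum_comm]
      _ = condEntW μ S Y := by
          unfold condEntW entW
          rw [Fintype.sum_prod_type]
          ring
  have hkey : ∀ b a, P a b * (Real.log (prW μ Y b) - Real.log (P a b)) = 0 := by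
    have h2 := (Finset.sum_eq_zero_iff_of_nonneg
      (fun b _ => Finset.sum_nonneg fun a _ => hterm a b)).1 hsum
    intro b a
    exact (Finset.sum_eq_zero_iff_of_nonneg (fun a _ => hterm a b)).1
      (h2 b (Finset.mem_univ b)) a (Finset.mem_univ a)
  intro ω ω' hω hω' hY
  by_contra hne
  set b := Y ω with hb
  have hμω : 0 < μ ω := lt_of_le_of_ne (hμ0 ω) (Ne.symm hω)
  have hμω' : 0 < μ ω' := lt_of_le_of_ne (hμ0 ω') (Ne.symm hω')
  have h1 : 0 < P (S ω) b :=
    lt_of_lt_of_le hμω (le_prW hμ0 (fun ω => (S ω, Y ω)) rfl)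
  have h2 : 0 < P (S ω') b :=
    lt_of_lt_of_le hμω' (le_prW hμ0 (fun ω => (S ω, Y ω)) (by rw [hY]))
  have heq : ∀ a, 0 < P a b → P a b = prW μ Y b := by
    intro a ha
    have hk := hkey b a
    rcases mul_eq_zero.1 hk with h0 | h0
    · exact absurd h0 (ne_of_gt ha)
    · have hlog : Real.log (prW μ Y b) = Real.log (P a b) := by linarith [sub_eq_zero.1 h0]
      have hpb : 0 < prW μ Y b := lt_of_lt_of_le ha (hPle a b)
      calc P a b = Real.exp (Real.log (P a b)) := (Real.exp_log ha).symm
        _ = Real.exp (Real.log (prW μ Y b)) := by rw [hlog]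
        _ = prW μ Y b := Real.exp_log hpb
  have hsub : P (S ω) b + P (S ω') b ≤ prW μ Y b := by
    rw [prW_fiber μ S Y b]
    have := Finset.sum_le_sum_of_subset_of_nonneg
      (Finset.subset_univ ({S ω, S ω'} : Finset α))
      (fun a _ _ => hPnn a b)
    rwa [Finset.sum_pair hne] at this
  have e1 := heq _ h1
  have e2 := heq _ h2
  have hpb : 0 < prW μ Y b := lt_of_lt_of_le h1 (hPle _ b)
  linarith

/-- If the conditional distribution of `W` given `C` is uniform on `α`, then
`H(W,C) = H(C) + log |α|`. -/
lemma entW_pair_uniform [Nonempty α] (μ : Ω → ℝ) (W : Ω → α) (C : Ω → β)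
    (hinv : ∀ a a' c, prW μ (fun ω => (W ω, C ω)) (a, c)
      = prW μ (fun ω => (W ω, C ω)) (a', c))
    (hq1 : ∑ c : β, prW μ C c = 1) :
    entW μ (fun ω => (W ω, C ω)) = entW μ C + Real.log (Fintype.card α) := by
  set N : ℝ := (Fintype.card α : ℝ) with hN
  have hNpos : (0 : ℝ) < N := by
    rw [hN]; exact_mod_cast Fintype.card_pos
  have hr : ∀ a c, prW μ (fun ω => (W ω, C ω)) (a, c) = prW μ C c / N := by
    intro a c
    have h1 : prW μ C c = ∑ a' : α, prW μ (fun ω => (W ω, C ω)) (a', c) :=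
      prW_fiber μ W C c
    have h2 : ∑ a' : α, prW μ (fun ω => (W ω, C ω)) (a', c)
        = N * prW μ (fun ω => (W ω, C ω)) (a, c) := by
      rw [Finset.sum_congr rfl (fun a' _ => hinv a' a c), Finset.sum_const,
        Finset.card_univ, nsmul_eq_mul, hN]
    rw [h1, h2]
    field_simp
  unfold entW
  rw [Fintype.sum_prod_type]
  have hin : ∀ a : α, ∑ c : β, prW μ (fun ω => (W ω, C ω)) (a, c)
      * Real.log (prW μ (fun ω => (W ω, C ω)) (a, c))
      = ∑ c : β, (prW μ C c / N) * Real.log (prW μ C c / N) :=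
    fun a => Finset.sum_congr rfl fun c _ => by rw [hr]
  rw [Finset.sum_congr rfl (fun a _ => hin a), Finset.sum_const, Finset.card_univ,
    nsmul_eq_mul, ← hN, Finset.mul_sum]
  have hterm : ∀ c : β, N * ((prW μ C c / N) * Real.log (prW μ C c / N))
      = prW μ C c * Real.log (prW μ C c) - prW μ C c * Real.log N := by
    intro c
    by_cases h0 : prW μ C c = 0
    · simp [h0]
    · rw [Real.log_div h0 (ne_of_gt hNpos)]
      field_simp
  rw [Finset.sum_congr rfl (fun c _ => hterm c), Finset.sum_sub_distrib,
    ← Finset.sum_mul, hq1]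
  ring

end AuxStmt12

/-- Lemma 1 of the paper: with i.i.d. uniform inputs independent of the keys, each
message `X_u` a deterministic function of `(W_u, Z_u)`, and the recovery constraint
`H(∑ W_i | {X_i}_{i≠k}, W_k, Z_k) = 0` for some user `k ≠ u`, it holds that
`H(X_u | {W_i, Z_i}_{i≠u}) ≥ L · log |F|`. -/
theorem stmt12 (F : Type) [Field F] [Fintype F] [DecidableEq F] (K L : ℕ)
    (ΩZ 𝒵 𝒳 : Type) [Fintype ΩZ] [Fintype 𝒵] [DecidableEq 𝒵] [Fintype 𝒳] [DecidableEq 𝒳]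
    (ν : ΩZ → ℝ) (hν0 : ∀ z, 0 ≤ ν z) (hν1 : ∑ z, ν z = 1)
    (Z : Fin K → ΩZ → 𝒵)
    (X : Fin K → (Fin K → Fin L → F) × ΩZ → 𝒳)
    (hX : ∀ i, ∃ f : (Fin L → F) × 𝒵 → 𝒳, ∀ ω, X i ω = f (ω.1 i, Z i ω.2))
    (k u : Fin K) (hku : k ≠ u)
    (hrec : condEntW (dsaMeas F K L ν)
        (fun ω => ∑ i, ω.1 i)
        (fun ω => ((fun i : {i : Fin K // i ≠ k} => X i.1 ω), ω.1 k, Z k ω.2)) = 0) :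
    L * Real.log (Fintype.card F)
      ≤ condEntW (dsaMeas F K L ν) (X u)
          (fun ω => fun i : {i : Fin K // i ≠ u} => (ω.1 i.1, Z i.1 ω.2)) := by
  classical
  haveI : Nonempty F := ⟨0⟩
  set μ := dsaMeas F K L ν with hμdef
  set C : (Fin K → Fin L → F) × ΩZ → ({i : Fin K // i ≠ u} → (Fin L → F) × 𝒵) :=
    fun ω => fun i : {i : Fin K // i ≠ u} => (ω.1 i.1, Z i.1 ω.2) with hCdef
  have hμ0 : ∀ ω, 0 ≤ μ ω := fun ω => div_nonneg (hν0 _) (Nat.cast_nonneg _)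
  set M : ℕ := Fintype.card (Fin K → Fin L → F) with hM
  have hMpos : (0 : ℝ) < M := by exact_mod_cast Fintype.card_pos
  have hμ1 : ∑ ω, μ ω = 1 := by
    rw [hμdef]
    unfold dsaMeas
    rw [Fintype.sum_prod_type]
    have : ∀ w : Fin K → Fin L → F, ∑ z : ΩZ, ν z / (M : ℝ) = 1 / M := by
      intro w
      rw [← Finset.sum_div, hν1]
    rw [Finset.sum_congr rfl (fun w _ => this w), Finset.sum_const, Finset.card_univ,
      nsmul_eq_mul, ← hM]
    field_simp
  -- determinism from the recovery constraint
  have hdet := condEntW_eq_zero_det hμ0 _ _ hrec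
  -- W_u is determined by (X_u, C) a.e.
  have hdet2 : ∀ ω ω', μ ω ≠ 0 → μ ω' ≠ 0 →
      (X u ω, C ω) = (X u ω', C ω') → ω.1 u = ω'.1 u := by
    intro ω ω' hω hω' hpq
    have hx : X u ω = X u ω' := congrArg Prod.fst hpq
    have hc : C ω = C ω' := congrArg Prod.snd hpq
    have hcomp : ∀ i, i ≠ u → ω.1 i = ω'.1 i ∧ Z i ω.2 = Z i ω'.2 := by
      intro i hi
      have h := congrFun hc ⟨i, hi⟩
      exact ⟨congrArg Prod.fst h, congrArg Prod.snd h⟩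
    have hYrec : ((fun i : {i : Fin K // i ≠ k} => X i.1 ω), ω.1 k, Z k ω.2)
        = ((fun i : {i : Fin K // i ≠ k} => X i.1 ω'), ω'.1 k, Z k ω'.2) := by
      simp only [Prod.mk.injEq]
      refine ⟨?_, (hcomp k hku).1, (hcomp k hku).2⟩
      funext i
      by_cases hiu : i.1 = u
      · rw [hiu]; exact hx
      · obtain ⟨f, hf⟩ := hX i.1
        rw [hf, hf, (hcomp i.1 hiu).1, (hcomp i.1 hiu).2]
    have hS : ∑ i, ω.1 i = ∑ i, ω'.1 i := hdet ω ω' hω hω' hYrec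
    have hsum' : ∑ i ∈ univ.erase u, ω.1 i = ∑ i ∈ univ.erase u, ω'.1 i :=
      Finset.sum_congr rfl fun i hi => (hcomp i (Finset.mem_erase.1 hi).1).1
    have h1 := Finset.add_sum_erase univ (fun i => ω.1 i) (Finset.mem_univ u)
    have h2 := Finset.add_sum_erase univ (fun i => ω'.1 i) (Finset.mem_univ u)
    have h3 : ω.1 u + ∑ i ∈ univ.erase u, ω.1 i
        = ω'.1 u + ∑ i ∈ univ.erase u, ω'.1 i := by
      rw [h1, h2]; exact hS
    rw [hsum'] at h3
    exact add_right_cancel h3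
  have hA : entW μ (fun ω => (ω.1 u, (X u ω, C ω)))
      = entW μ (fun ω => (X u ω, C ω)) :=
    entW_pair_eq hμ0 (fun ω => ω.1 u) (fun ω => (X u ω, C ω)) hdet2
  have hB : entW μ (fun ω => (ω.1 u, C ω))
      ≤ entW μ (fun ω => (ω.1 u, (X u ω, C ω))) :=
    entW_comp_le hμ0 (fun ω => (ω.1 u, (X u ω, C ω))) (fun p => (p.1, p.2.2))
  -- uniform conditional distribution of W_u given C
  have hinv : ∀ a a' c, prW μ (fun ω => (ω.1 u, C ω)) (a, c)
      = prW μ (fun ω => (ω.1 u, C ω)) (a', c) := by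
    intro a a' c
    unfold prW
    refine Finset.sum_nbij' (fun ω => (Function.update ω.1 u a', ω.2))
      (fun ω => (Function.update ω.1 u a, ω.2)) ?_ ?_ ?_ ?_ ?_
    · intro ω hω
      simp only [Finset.mem_filter, Finset.mem_univ, true_and, Prod.mk.injEq] at hω ⊢
      refine ⟨Function.update_self u a' ω.1, ?_⟩
      rw [← hω.2, hCdef]
      funext i
      simp [Function.update_of_ne i.2]
    · intro ω hω
      simp only [Finset.mem_filter, Finset.mem_univ, true_and, Prod.mk.injEq] at hω ⊢
      refine ⟨Function.update_self u a ω.1, ?_⟩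
      rw [← hω.2, hCdef]
      funext i
      simp [Function.update_of_ne i.2]
    · intro ω hω
      simp only [Finset.mem_filter, Finset.mem_univ, true_and, Prod.mk.injEq] at hω
      have : Function.update (Function.update ω.1 u a') u a = ω.1 := by
        rw [Function.update_idem, ← hω.1, Function.update_eq_self]
      simp [this]
    · intro ω hω
      simp only [Finset.mem_filter, Finset.mem_univ, true_and, Prod.mk.injEq] at hω
      have : Function.update (Function.update ω.1 u a) u a' = ω.1 := by
        rw [Function.update_idem, ← hω.1, Function.update_eq_self]
      simp [this]
    · intro ω _
      rfl
  have hq1 : ∑ c, prW μ C c = 1 := by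
    rw [← hμ1]
    unfold prW
    exact Finset.sum_fiberwise univ C μ
  have hC : entW μ (fun ω => (ω.1 u, C ω))
      = entW μ C + Real.log (Fintype.card (Fin L → F)) :=
    entW_pair_uniform μ (fun ω => ω.1 u) C hinv hq1
  have hlog : Real.log (Fintype.card (Fin L → F)) = L * Real.log (Fintype.card F) := by
    rw [Fintype.card_fun, Fintype.card_fin, Nat.cast_pow, Real.log_pow]
  unfold condEntW
  rw [← hA] at *
  linarith [hB, hC, hlog.symm.le]
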